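/- The map σ from the set Z of Z-reduced forms to the set B₁ of binary strings containing at least one '1' is surjective. The map τ ∘ sb⁻¹ is a section of σ (i.e., σ(τ(sb⁻¹(s))) = s for every s in B₁), and its image is exactly the set of Z-reduced forms whose discriminant has the form k²+4 or k²−4 for some integer k. -/

import Mathlib

/-- A binary quadratic form `A x² + B x y + C y²` with integer coefficients. -/
structure QF where
  a : ℤ
  b : ℤ
  c : ℤ

/-- The discriminant `B² - 4AC` of a form. -/
def QF.disc (f : QF) : ℤ := f.b ^ 2 - 4 * f.a * f.c

/-- The action of a matrix `[[α, β], [γ, δ]]` on a form: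
`f(x,y) ↦ f(αx + βy, γx + δy)`. -/
def QF.transform (f : QF) (α β γ δ : ℤ) : QF :=
  ⟨f.a * α ^ 2 + f.b * α * γ + f.c * γ ^ 2,
   2 * f.a * α * β + f.b * (α * δ + β * γ) + 2 * f.c * γ * δ,
   f.a * β ^ 2 + f.b * β * δ + f.c * δ ^ 2⟩

/-- A form is indefinite if its discriminant is positive and not a perfect square. -/
def QF.IsIndefinite (f : QF) : Prop := 0 < f.disc ∧ ¬ IsSquare f.disc

/-- An indefinite form `(A,B,C)` is Z-reduced if `A,B,C > 0` and `B > A + C`. -/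
def QF.IsZReduced (f : QF) : Prop :=
  f.IsIndefinite ∧ 0 < f.a ∧ 0 < f.b ∧ 0 < f.c ∧ f.a + f.c < f.b

/-- An indefinite form `(A,B,C)` is G-reduced if `AC < 0` and `B > |A + C|`. -/
def QF.IsGReduced (f : QF) : Prop :=
  f.IsIndefinite ∧ f.a * f.c < 0 ∧ |f.a + f.c| < f.b

/-- G-reduced with `A > 0`. -/
def QF.IsGPlus (f : QF) : Prop := f.IsGReduced ∧ 0 < f.a

/-- G-reduced with `A < 0`. -/
def QF.IsGMinus (f : QF) : Prop := f.IsGReduced ∧ f.a < 0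

/-- `(t, u)` is the fundamental solution of `|t² - Δ u²| = 4`:
a solution in positive integers with `u` minimal. -/
def IsFundSol (Δ t u : ℤ) : Prop :=
  0 < t ∧ 0 < u ∧ |t ^ 2 - Δ * u ^ 2| = 4 ∧
    ∀ t' u' : ℤ, 0 < t' → 0 < u' → |t' ^ 2 - Δ * u' ^ 2| = 4 → u ≤ u'

/-- The continuant of a finite sequence of integers. -/
def cont : List ℤ → ℤ
  | [] => 1
  | [q] => q
  | q :: r :: t => q * cont (r :: t) + cont t

/-- `L` is the list of partial quotients of a regular continued fraction expansion of
the rational number `x`: all partial quotients are positive and the value of the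
continued fraction, namely `cont L / cont L.tail`, equals `x`. -/
def IsCF (x : ℚ) (L : List ℤ) : Prop :=
  L ≠ [] ∧ (∀ q ∈ L, 0 < q) ∧ (cont L : ℚ) = x * cont L.tail

/-- The bead sequence `β(f)` of a Z-reduced form `f = (A,B,C)` of discriminant `Δ`:
with `(t,u)` the fundamental solution of `|t² - Δu²| = 4` and `z = (t + Bu)/2`,
it is the continued fraction expansion of `z/(z - Au)` whose number of partial
quotients is even if `t² - Δu² = -4` and odd otherwise. -/
def QF.IsBeta (f : QF) (L : List ℤ) : Prop :=
  ∃ t u : ℤ, IsFundSol f.disc t u ∧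
    IsCF ((((t + f.b * u : ℤ) : ℚ) / 2) / ((((t + f.b * u : ℤ) : ℚ) / 2) - ((f.a * u : ℤ) : ℚ))) L ∧
    (t ^ 2 - f.disc * u ^ 2 = -4 → Even L.length) ∧
    (t ^ 2 - f.disc * u ^ 2 = 4 → Odd L.length)

/-- Dirichlet's map `γ(f)` for `f = (A,B,C)` in `G⁺` of discriminant `Δ`:
with `(t,u)` the fundamental solution of `|t² - Δu²| = 4` and `z = (t + Bu)/2`,
it is the continued fraction expansion of `z/(Au)` whose number of partial
quotients is odd if `t² - Δu² = -4` and even otherwise. -/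
def QF.IsGamma (f : QF) (L : List ℤ) : Prop :=
  ∃ t u : ℤ, IsFundSol f.disc t u ∧
    IsCF ((((t + f.b * u : ℤ) : ℚ) / 2) / ((f.a * u : ℤ) : ℚ)) L ∧
    (t ^ 2 - f.disc * u ^ 2 = -4 → Odd L.length) ∧
    (t ^ 2 - f.disc * u ^ 2 = 4 → Even L.length)

/-- The stars-and-bars map: `(q₁, …, q_l)` is sent to the binary string of length
`q₁ + ⋯ + q_l - 1` whose `j`-th character is `1` exactly at the partial sums
`q₁, q₁ + q₂, …, q₁ + ⋯ + q_{l-1}`. -/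
def sb : List ℤ → List Bool
  | [] => []
  | [q] => List.replicate (q - 1).toNat false
  | q :: r :: t => List.replicate (q - 1).toNat false ++ true :: sb (r :: t)

/-- `σ(f) = sb(β(f))`. -/
def QF.IsSigma (f : QF) (s : List Bool) : Prop :=
  ∃ L : List ℤ, f.IsBeta L ∧ s = sb L

/-- Zagier's reduction operator: `f ↦ f(nx + y, -x)` with `n = ⌈(B + √Δ)/(2A)⌉`. -/
noncomputable def RZ (f : QF) : QF :=
  f.transform ⌈((f.b : ℝ) + Real.sqrt (f.disc : ℝ)) / (2 * (f.a : ℝ))⌉ 1 (-1) 0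

/-- The number `δ` in Gauss's reduction operator: `|δ| = ⌊(B + √Δ)/(2|A|)⌋` with
`δ` having the sign of `A`. -/
noncomputable def gaussDelta (f : QF) : ℤ :=
  f.a.sign * ⌊((f.b : ℝ) + Real.sqrt (f.disc : ℝ)) / (2 * |(f.a : ℝ)|)⌋

/-- Gauss's reduction operator: `f ↦ f(δx + y, -x)`. -/
noncomputable def RG (f : QF) : QF := f.transform (gaussDelta f) 1 (-1) 0

/-- Add `1` to the last entry of a list. -/
def addLast : List ℤ → List ℤ
  | [] => []
  | [q] => [q + 1]
  | q :: r :: t => q :: addLast (r :: t)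

/-- Subtract `1` from the last entry of a list. -/
def subLast : List ℤ → List ℤ
  | [] => []
  | [q] => [q - 1]
  | q :: r :: t => q :: subLast (r :: t)

/-- Subtract `1` from the first entry of a list. -/
def decHead : List ℤ → List ℤ
  | [] => []
  | q :: t => (q - 1) :: t

/-- The operator `T_Z`: `(q₁,…,q_l) ↦ (q₁-1, q₂, …, q_{l-1}, q_l+1)` if `q₁ ≥ 2`;
`(q₂, q₁)` if `q₁ = 1` and `l = 2`; `(q₃, …, q_l, q₂, q₁)` if `q₁ = 1` and `l > 2`. -/
def TZ : List ℤ → List ℤ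
  | [] => []
  | [q] => [q]
  | q :: r :: s => if q = 1 then s ++ [r, 1] else (q - 1) :: addLast (r :: s)

/-- The map `μ` from G-reduced forms to Z-reduced forms. -/
def mu (f : QF) : QF :=
  if 0 < f.a then ⟨f.a, 2 * f.a + f.b, f.a + f.b + f.c⟩
  else ⟨f.a + f.b + f.c, f.b + 2 * f.c, f.c⟩

/-- The section `τ` of `β`: `τ((q₁,…,q_l)) = (A,B,C)` with `A = [q₁-1, q₂, …, q_l]`,
`C = [q₁, …, q_{l-1}, q_l - 1]`, `B = [q₁,…,q_l] + [q₁-1, q₂, …, q_{l-1}, q_l-1]`. -/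
def tau (L : List ℤ) : QF :=
  ⟨cont (decHead L), cont L + cont (subLast (decHead L)), cont (subLast L)⟩

/-- Multiply all coefficients of a form by `u`. -/
def QF.smul (u : ℤ) (f : QF) : QF := ⟨u * f.a, u * f.b, u * f.c⟩

/-- The reversal `(A,B,C)^R = (C,B,A)`. -/
def QF.rev (f : QF) : QF := ⟨f.c, f.b, f.a⟩

/-- The map `ρ((A,B,C)) = (-A, B, -C)`. -/
def rho (f : QF) : QF := ⟨-f.a, f.b, -f.c⟩

/-- A form is primitive if its coefficients have gcd 1. -/
def IsPrimitiveForm (f : QF) : Prop := Int.gcd f.a (Int.gcd f.b f.c) = 1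

/-- `SL₂(ℤ)`-equivalence of forms. -/
def FormEquiv (f g : QF) : Prop :=
  ∃ α β γ δ : ℤ, α * δ - β * γ = 1 ∧ g = f.transform α β γ δ

/-- A nonempty string is primitive if it differs from all of its nontrivial cyclic
shifts. -/
def PrimitiveList {α : Type*} (l : List α) : Prop :=
  l ≠ [] ∧ ∀ n, 0 < n → n < l.length → l.rotate n ≠ l

/-- The continuant `[q₂, …, q_{l-1}]` of the interior of a list, with the convention
that it is `0` for a list of length `≤ 1`. -/
def innerCont (L : List ℤ) : ℤ := if L.length ≤ 1 then 0 else cont (L.tail.dropLast)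

/-- The section `ξ` of `γ`: `ξ((q₁,…,q_l)) = (A,B,C)` with `A = [q₂,…,q_l]`,
`B = [q₁,…,q_l] - [q₂,…,q_{l-1}]`, `C = -[q₁,…,q_{l-1}]`. -/
def xiForm (L : List ℤ) : QF := ⟨cont L.tail, cont L - innerCont L, -(cont L.dropLast)⟩

/-- `p` is the minimal period of the purely periodic sequence `d`. -/
def IsMinPeriod {α : Type*} [Inhabited α] (d : ℕ → α) (p : List α) : Prop :=
  p ≠ [] ∧ (∀ n, d n = p.getD (n % p.length) default) ∧
    ∀ m, 0 < m → (∀ n, d (n + m) = d n) → p.length ≤ m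

/-- `d` is the sequence of partial quotients of the Denjoy continued fraction of `x`
(`true` = quotient 1, `false` = quotient 0): `ξ₀ = x`, `qₙ = 0` if `ξ_{n-1} < 1`,
`qₙ = 1` if `ξ_{n-1} > 1`, and `ξₙ = 1/(ξ_{n-1} - qₙ)`. -/
def IsDenjoySeq (x : ℝ) (d : ℕ → Bool) : Prop :=
  ∃ ξ : ℕ → ℝ, ξ 0 = x ∧
    ∀ n, ((ξ n < 1 ∧ d n = false) ∨ (1 < ξ n ∧ d n = true)) ∧
      ξ (n + 1) = 1 / (ξ n - if d n then 1 else 0)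

/-- `a` is the sequence of partial quotients of the regular continued fraction of `x`. -/
def IsRegCFSeq (x : ℝ) (a : ℕ → ℤ) : Prop :=
  ∃ ξ : ℕ → ℝ, ξ 0 = x ∧ ∀ n, a n = ⌊ξ n⌋ ∧ ξ (n + 1) = 1 / (ξ n - (a n : ℝ))

/-- Regular-to-Denjoy conversion: each partial quotient `q` becomes the string
`1 0 1 0 ⋯ 0 1` of `q` ones alternating with `q - 1` zeroes. -/
def regToDen (L : List ℤ) : List Bool :=
  (L.map fun q => true :: (List.replicate (q - 1).toNat [false, true]).flatten).flatten

/-- Replace each character `0` by the two characters `01`. -/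
def expand01 (s : List Bool) : List Bool :=
  (s.map fun b => if b then [true] else [false, true]).flatten

/-- A quadratic irrational. -/
def IsQuadIrrational (x : ℝ) : Prop :=
  Irrational x ∧ ∃ a b c : ℤ, a ≠ 0 ∧ (a : ℝ) * x ^ 2 + (b : ℝ) * x + (c : ℝ) = 0


/-! ### Auxiliary lemmas for the proof -/

theorem cont_nil : cont [] = 1 := rfl

theorem cont_singleton (q : ℤ) : cont [q] = q := rfl

theorem cont_cc (a b : ℤ) (X : List ℤ) :
    cont (a :: b :: X) = a * cont (b :: X) + cont X := rfl

theorem subLast_cc (a b : ℤ) (X : List ℤ) :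
    subLast (a :: b :: X) = a :: subLast (b :: X) := rfl

theorem subLast_singleton (a : ℤ) : subLast [a] = [a - 1] := rfl

theorem decHead_cons (a : ℤ) (X : List ℤ) : decHead (a :: X) = (a - 1) :: X := rfl

theorem cont_cons (q : ℤ) (N : List ℤ) (h : N ≠ []) :
    cont (q :: N) = q * cont N + cont N.tail := by
  match N with
  | r :: t => rfl

theorem pos_tail {L : List ℤ} (h : ∀ q ∈ L, 0 < q) : ∀ q ∈ L.tail, 0 < q :=
  fun x hx => h x (List.mem_of_mem_tail hx)

theorem pos_dropLast {L : List ℤ} (h : ∀ q ∈ L, 0 < q) : ∀ q ∈ L.dropLast, 0 < q :=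
  fun x hx => h x ((List.dropLast_sublist L).subset hx)

theorem cont_pos : ∀ (L : List ℤ), (∀ q ∈ L, 0 < q) → 1 ≤ cont L
  | [], _ => le_refl 1
  | [q], h => h q (by simp)
  | q :: r :: t, h => by
    have h1 := cont_pos (r :: t) (fun x hx => h x (List.mem_cons_of_mem q hx))
    have h2 := cont_pos t (fun x hx => h x (by simp [hx]))
    have hq := h q (by simp)
    rw [cont_cc]
    nlinarith

theorem cont_ge_two (q r : ℤ) (t : List ℤ) (h : ∀ x ∈ q :: r :: t, 0 < x) :
    2 ≤ cont (q :: r :: t) := by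
  have h1 := cont_pos (r :: t) (fun x hx => h x (List.mem_cons_of_mem q hx))
  have h2 := cont_pos t (fun x hx => h x (by simp [hx]))
  have hq := h q (by simp)
  rw [cont_cc]
  nlinarith

theorem cont_tail_lt (q : ℤ) (N : List ℤ) (hN : N ≠ []) (h : ∀ x ∈ q :: N, 0 < x) :
    cont N < cont (q :: N) := by
  rw [cont_cons q N hN]
  have h1 := cont_pos N (fun x hx => h x (List.mem_cons_of_mem q hx))
  have h2 := cont_pos N.tail (pos_tail (fun x hx => h x (List.mem_cons_of_mem q hx)))
  have hq := h q (by simp)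
  nlinarith

theorem cont_dropLast : ∀ (L : List ℤ), (∀ q ∈ L, 0 < q) →
    cont L.dropLast ≤ cont L ∧ (2 ≤ L.length → cont L.dropLast < cont L)
  | [], _ => by simp
  | [q], h => by
    have hq := h q (by simp)
    refine ⟨?_, ?_⟩
    · show (1 : ℤ) ≤ q; omega
    · intro h2; simp at h2
  | q :: r :: t, h => by
    have hq := h q (by simp)
    have hrt : ∀ x ∈ r :: t, 0 < x := fun x hx => h x (List.mem_cons_of_mem q hx)
    have ht : ∀ x ∈ t, 0 < x := fun x hx => h x (by simp [hx])
    have IH1 := cont_dropLast (r :: t) hrt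
    have IH2 := cont_dropLast t ht
    cases t with
    | nil =>
      have hr := h r (by simp)
      simp only [List.dropLast_cons₂, List.dropLast_singleton, cont_cc, cont_singleton, cont_nil]
      constructor
      · nlinarith
      · intro _; nlinarith
    | cons s t' =>
      have h1 : cont (r :: (s :: t').dropLast) < cont (r :: s :: t') := by
        have := IH1.2 (by simp)
        simpa only [List.dropLast_cons₂] using this
      have h2 : cont (s :: t').dropLast ≤ cont (s :: t') := IH2.1
      simp only [List.dropLast_cons₂, cont_cc]
      rw [cont_cc] at h1
      constructor
      · nlinarith
      · intro _; nlinarith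

theorem cont_dropLast_le (L : List ℤ) (h : ∀ q ∈ L, 0 < q) :
    cont L.dropLast ≤ cont L := (cont_dropLast L h).1

theorem cont_dropLast_lt (L : List ℤ) (h : ∀ q ∈ L, 0 < q) (h2 : 2 ≤ L.length) :
    cont L.dropLast < cont L := (cont_dropLast L h).2 h2

theorem cont_decHead (q : ℤ) (N : List ℤ) :
    cont (decHead (q :: N)) = cont (q :: N) - cont N := by
  cases N with
  | nil => show q - 1 = q - 1; rfl
  | cons r t =>
    rw [decHead_cons]
    simp only [cont_cc]
    ring

theorem cont_subLast : ∀ (L : List ℤ), L ≠ [] →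
    cont (subLast L) = cont L - cont L.dropLast
  | [], h => absurd rfl h
  | [q], _ => by show q - 1 = q - cont []; rfl
  | [q, r], _ => by
    simp only [subLast_cc, subLast_singleton, cont_cc, cont_singleton,
      List.dropLast_cons₂, List.dropLast_singleton, cont_nil]
    ring
  | q :: r :: s :: t', _ => by
    have IH1 := cont_subLast (r :: s :: t') (by simp)
    have IH2 := cont_subLast (s :: t') (by simp)
    simp only [subLast_cc, cont_cc, List.dropLast_cons₂] at IH1 IH2 ⊢
    linear_combination q * IH1 + IH2

theorem cont_subLast_decHead (q r : ℤ) (t : List ℤ) :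
    cont (subLast (decHead (q :: r :: t))) =
      cont (q :: r :: t) - cont (r :: t) - cont ((q :: r :: t).dropLast)
        + cont ((r :: t).dropLast) := by
  cases t with
  | nil =>
    simp only [decHead_cons, subLast_cc, subLast_singleton, cont_cc, cont_singleton,
      List.dropLast_cons₂, List.dropLast_singleton, cont_nil]
    ring
  | cons s t' =>
    have e1 := cont_subLast (r :: s :: t') (by simp)
    have e2 := cont_subLast (s :: t') (by simp)
    simp only [decHead_cons, subLast_cc, cont_cc, List.dropLast_cons₂] at e1 e2 ⊢
    linear_combination (q - 1) * e1 + e2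

theorem cont_det : ∀ (L : List ℤ), 2 ≤ L.length →
    cont L * cont L.tail.dropLast - cont L.tail * cont L.dropLast = (-1 : ℤ) ^ L.length
  | [], h => by simp at h
  | [q], h => by simp at h
  | [q, r], _ => by
    simp only [List.tail_cons, List.dropLast_cons₂, List.dropLast_singleton, cont_cc,
      cont_singleton, cont_nil, List.length_cons, List.length_nil]
    ring
  | q :: r :: s :: t, _ => by
    have IH := cont_det (r :: s :: t) (by simp)
    have hlen : (q :: r :: s :: t).length = (r :: s :: t).length + 1 := rfl
    rw [hlen, pow_succ]
    simp only [List.tail_cons, List.dropLast_cons₂, cont_cc] at IH ⊢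
    linear_combination (-1) * IH

/-- Evaluation of `tau` in terms of the four basic continuants. -/
theorem tau_eval (q r : ℤ) (t : List ℤ) :
    tau (q :: r :: t) =
      ⟨cont (q :: r :: t) - cont (r :: t),
       2 * cont (q :: r :: t) - cont (r :: t) - cont ((q :: r :: t).dropLast)
         + cont ((r :: t).dropLast),
       cont (q :: r :: t) - cont ((q :: r :: t).dropLast)⟩ := by
  show QF.mk _ _ _ = QF.mk _ _ _
  rw [QF.mk.injEq]
  refine ⟨cont_decHead q (r :: t), ?_, cont_subLast (q :: r :: t) (by simp)⟩
  rw [cont_subLast_decHead q r t]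
  ring

theorem nonsq_plus (k : ℤ) (hk : 1 ≤ k) : ¬ IsSquare (k ^ 2 + 4) := by
  rintro ⟨m, hm⟩
  have hm' : |m| * |m| = k ^ 2 + 4 := by rw [abs_mul_abs_self]; omega
  set a := |m| with ha
  have ha0 : 0 ≤ a := abs_nonneg m
  have h1 : k < a := by nlinarith
  have h2 : k + 1 ≤ a := h1
  have h3 : k = 1 := by nlinarith
  subst h3
  have h4 : a = 2 := by nlinarith
  rw [h4] at hm'
  norm_num at hm'

theorem nonsq_minus (k : ℤ) (hk : 3 ≤ k) : ¬ IsSquare (k ^ 2 - 4) := by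
  rintro ⟨m, hm⟩
  have hm' : |m| * |m| = k ^ 2 - 4 := by rw [abs_mul_abs_self]; omega
  set a := |m| with ha
  have ha0 : 0 ≤ a := abs_nonneg m
  have h1 : a < k := by nlinarith
  have h2 : a ≤ k - 1 := by omega
  nlinarith

/-- The key facts about `tau L` for a positive list of length at least 2. -/
theorem tau_main (L : List ℤ) (h2 : 2 ≤ L.length) (hpos : ∀ q ∈ L, 0 < q) :
    (tau L).IsZReduced ∧ (tau L).IsBeta L ∧
      (∃ k : ℤ, (tau L).disc = k ^ 2 + 4 ∨ (tau L).disc = k ^ 2 - 4) := by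
  rcases L with _ | ⟨q, _ | ⟨r, t⟩⟩
  · simp at h2
  · simp at h2
  set M := q :: r :: t with hM
  set K := cont M with hK
  set K1 := cont (r :: t) with hK1
  set K2 := cont M.dropLast with hK2
  set K3 := cont ((r :: t).dropLast) with hK3
  have hposrt : ∀ x ∈ r :: t, 0 < x := fun x hx => hpos x (List.mem_cons_of_mem q hx)
  set k := K1 + K2 - K3 with hk
  have htail : M.tail = r :: t := rfl
  have hdet : K * K3 - K1 * K2 = (-1 : ℤ) ^ M.length := by
    have h := cont_det M (by simp [hM])
    rw [htail] at h
    exact h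
  have heval := tau_eval q r t
  have hdisc : (tau M).disc = k ^ 2 + 4 * (-1 : ℤ) ^ M.length := by
    rw [heval]
    show (2 * K - K1 - K2 + K3) ^ 2 - 4 * (K - K1) * (K - K2) = _
    rw [← hdet]; ring
  have hK1pos : 1 ≤ K1 := cont_pos _ hposrt
  have hK2pos : 1 ≤ K2 := cont_pos _ (pos_dropLast hpos)
  have hK3pos : 1 ≤ K3 := cont_pos _ (pos_dropLast hposrt)
  have hK31 : K3 ≤ K1 := cont_dropLast_le _ hposrt
  have hKgtK1 : K1 < K := cont_tail_lt q (r :: t) (by simp) hpos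
  have hKgtK2 : K2 < K := cont_dropLast_lt M hpos (by simp [hM])
  have hk1 : 1 ≤ k := by omega
  have hkodd : Odd M.length → 3 ≤ k := by
    intro hodd
    cases t with
    | nil => exfalso; obtain ⟨m, hm⟩ := hodd; rw [hM] at hm; simp at hm
    | cons s t' =>
      have h31 : K3 < K1 := by
        have := cont_dropLast_lt (r :: s :: t') hposrt (by simp)
        exact this
      have h22 : 2 ≤ K2 := by
        have hh : K2 = cont (q :: r :: (s :: t').dropLast) := rfl
        rw [hh]
        exact cont_ge_two _ _ _ (pos_dropLast hpos)
      omega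
  have hA : (tau M).a = K - K1 := by rw [heval]
  have hB : (tau M).b = 2 * K - K1 - K2 + K3 := by rw [heval]
  have hC : (tau M).c = K - K2 := by rw [heval]
  have hZred : (tau M).IsZReduced := by
    refine ⟨⟨?_, ?_⟩, ?_, ?_, ?_, ?_⟩
    · rw [hdisc]
      rcases Nat.even_or_odd M.length with he | ho
      · rw [he.neg_one_pow]; nlinarith
      · rw [ho.neg_one_pow]; have := hkodd ho; nlinarith
    · rw [hdisc]
      rcases Nat.even_or_odd M.length with he | ho
      · rw [he.neg_one_pow]
        have h' : k ^ 2 + 4 * (1 : ℤ) = k ^ 2 + 4 := by ring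
        rw [h']
        exact nonsq_plus k hk1
      · rw [ho.neg_one_pow]
        have h' : k ^ 2 + 4 * (-1 : ℤ) = k ^ 2 - 4 := by ring
        rw [h']
        exact nonsq_minus k (hkodd ho)
    · rw [hA]; omega
    · rw [hB]; omega
    · rw [hC]; omega
    · rw [hA, hB, hC]; omega
  refine ⟨hZred, ?_, ?_⟩
  · -- IsBeta with t = k, u = 1
    refine ⟨k, 1, ⟨by omega, by omega, ?_, fun t' u' _ hu' _ => by omega⟩, ?_, ?_, ?_⟩
    · rw [hdisc]
      rcases Nat.even_or_odd M.length with he | ho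
      · rw [he.neg_one_pow]
        have h' : k ^ 2 - (k ^ 2 + 4 * (1 : ℤ)) * 1 ^ 2 = -4 := by ring
        rw [h']; norm_num
      · rw [ho.neg_one_pow]
        have h' : k ^ 2 - (k ^ 2 + 4 * (-1 : ℤ)) * 1 ^ 2 = 4 := by ring
        rw [h']; norm_num
    · -- IsCF
      have hK1ne : ((K1 : ℚ)) ≠ 0 := by
        have : K1 ≠ 0 := by omega
        exact_mod_cast this
      have e1 : ((k + (tau M).b * 1 : ℤ) : ℚ) = 2 * (K : ℚ) := by
        rw [hB, hk]; push_cast; ring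
      have e2 : ((k + (tau M).b * 1 : ℤ) : ℚ) / 2 = (K : ℚ) := by
        rw [e1]; ring
      have e3 : (((tau M).a * 1 : ℤ) : ℚ) = (K : ℚ) - (K1 : ℚ) := by
        rw [hA]; push_cast; ring
      refine ⟨by simp [hM], hpos, ?_⟩
      rw [e2, e3, htail, ← hK1, ← hK]
      have e4 : (K : ℚ) - ((K : ℚ) - (K1 : ℚ)) = (K1 : ℚ) := by ring
      rw [e4, div_mul_cancel₀ _ hK1ne]
    · intro hval
      rw [hdisc] at hval
      rcases Nat.even_or_odd M.length with he | ho
      · exact he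
      · exfalso; rw [ho.neg_one_pow] at hval; nlinarith [hval]
    · intro hval
      rw [hdisc] at hval
      rcases Nat.even_or_odd M.length with he | ho
      · exfalso; rw [he.neg_one_pow] at hval; nlinarith [hval]
      · exact ho
  · refine ⟨k, ?_⟩
    rw [hdisc]
    rcases Nat.even_or_odd M.length with he | ho
    · left; rw [he.neg_one_pow]; ring
    · right; rw [ho.neg_one_pow]; ring

/-- Euclidean-algorithm construction of a continued fraction with prescribed
numerator, denominator and length parity. -/
theorem euclid_cf (q p : ℤ) (hq : 1 ≤ q) (hpq : q < p) (hco : IsCoprime p q) (b : Bool) :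
    ∃ L : List ℤ, (∀ x ∈ L, 0 < x) ∧ cont L = p ∧ cont L.tail = q ∧
      (Even L.length ↔ b = true) := by
  by_cases h1 : q = 1
  · subst h1
    cases b with
    | false =>
      refine ⟨[p], ?_, rfl, rfl, by simp⟩
      intro x hx; simp at hx; omega
    | true =>
      refine ⟨[p - 1, 1], ?_, ?_, rfl, by simp⟩
      · intro x hx; simp at hx; rcases hx with h | h <;> omega
      · rw [cont_cc, cont_singleton, cont_nil]; ring
  · have hq2 : 2 ≤ q := by omega
    have hq0 : 0 < q := by omega
    set r := p % q with hr
    set a := p / q with haq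
    have hrq : r < q := Int.emod_lt_of_pos p hq0
    have hr0 : 0 ≤ r := Int.emod_nonneg p (by omega)
    have hpr : a * q + r = p := by
      rw [haq, hr]
      exact Int.ediv_mul_add_emod p q
    have hr1 : 1 ≤ r := by
      rcases eq_or_lt_of_le hr0 with h0 | h0
      · exfalso
        obtain ⟨u, v, huv⟩ := hco
        have hdvd : q ∣ 1 := ⟨u * a + v, by linear_combination -huv - u * hpr - u * h0⟩
        have := Int.le_of_dvd one_pos hdvd
        omega
      · omega
    have ha1 : 1 ≤ a := by
      rw [haq, Int.le_ediv_iff_mul_le hq0]; omega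
    have hco' : IsCoprime q r := by
      have h := hco.symm
      have h2 := h.add_mul_left_right (-a)
      have hr' : p + q * (-a) = r := by linarith [hpr]
      rwa [hr'] at h2
    obtain ⟨L', hp1, hp2, hp3, hp4⟩ := euclid_cf r q hr1 hrq hco' (!b)
    have hL'ne : L' ≠ [] := by
      intro hc; rw [hc] at hp2; rw [cont_nil] at hp2; omega
    refine ⟨a :: L', ?_, ?_, ?_, ?_⟩
    · intro x hx
      rcases List.mem_cons.mp hx with rfl | hx
      · omega
      · exact hp1 x hx
    · rw [cont_cons a L' hL'ne, hp2, hp3]; linarith [hpr]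
    · exact hp2
    · simp only [List.length_cons, Nat.even_add_one]
      cases b <;> simp_all
  termination_by q.toNat
  decreasing_by omega

theorem z_bound (A B C t e z : ℤ) (hA : 1 ≤ A) (hC : 1 ≤ C) (hB : A + C < B)
    (ht : 1 ≤ t) (he : e = 1 ∨ e = -1) (hsq : t ^ 2 = B ^ 2 - 4 * A * C + 4 * e)
    (hz : 2 * z = t + B) : C < z := by
  by_contra hcon
  push_neg at hcon
  have h1 : t ≤ C - A - 1 := by omega
  have h2 : t ^ 2 ≤ (C - A - 1) ^ 2 := by nlinarith
  have h3 : (A + C + 1) ^ 2 ≤ B ^ 2 := by nlinarith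
  have hC2 : C ≤ 2 := by rcases he with rfl | rfl <;> nlinarith
  omega

theorem even_add_of_sq (t B d : ℤ) (h : t ^ 2 - B ^ 2 = 4 * d) : Even (t + B) := by
  rcases Int.even_or_odd t with ⟨m, hm⟩ | ⟨m, hm⟩ <;>
    rcases Int.even_or_odd B with ⟨n, hn⟩ | ⟨n, hn⟩ <;> subst hm <;> subst hn
  · exact ⟨m + n, by ring⟩
  · exfalso
    have h5 : (4 : ℤ) ∣ 1 := ⟨m ^ 2 - n ^ 2 - n - d, by linear_combination -h⟩
    norm_num at h5
  · exfalso
    have h5 : (4 : ℤ) ∣ 1 := ⟨d - m ^ 2 - m + n ^ 2, by linear_combination h⟩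
    norm_num at h5
  · exact ⟨m + n + 1, by ring⟩

/-- The converse construction: every Z-reduced form of discriminant `k² ± 4`
is `tau L` for a positive list `L` of length at least 2. -/
theorem tau_surj (f : QF) (hZ : f.IsZReduced)
    (hk : ∃ k : ℤ, f.disc = k ^ 2 + 4 ∨ f.disc = k ^ 2 - 4) :
    ∃ L : List ℤ, 2 ≤ L.length ∧ (∀ q ∈ L, 0 < q) ∧ tau L = f := by
  obtain ⟨A, B, C⟩ := f
  obtain ⟨⟨hdpos, hdnsq⟩, hA, hBpos, hC, hABC⟩ := hZ
  obtain ⟨k, hk⟩ := hk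
  replace hdpos : 0 < B ^ 2 - 4 * A * C := hdpos
  replace hdnsq : ¬ IsSquare (B ^ 2 - 4 * A * C) := hdnsq
  replace hA : 0 < A := hA
  replace hBpos : 0 < B := hBpos
  replace hC : 0 < C := hC
  replace hABC : A + C < B := hABC
  replace hk : B ^ 2 - 4 * A * C = k ^ 2 + 4 ∨ B ^ 2 - 4 * A * C = k ^ 2 - 4 := hk
  -- extract `t` and `e`
  obtain ⟨t, e, ht1, he, hsq⟩ :
      ∃ t e : ℤ, 1 ≤ t ∧ (e = 1 ∨ e = -1) ∧ t ^ 2 = B ^ 2 - 4 * A * C + 4 * e := by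
    rcases hk with hk | hk
    · refine ⟨|k|, -1, ?_, Or.inr rfl, ?_⟩
      · rcases eq_or_ne k 0 with rfl | hk0
        · exfalso; rw [hk] at hdnsq
          exact hdnsq ⟨2, by norm_num⟩
        · rcases abs_cases k with ⟨h1, h2⟩ | ⟨h1, h2⟩ <;> omega
      · rw [sq_abs]; linarith [hk]
    · refine ⟨|k|, 1, ?_, Or.inl rfl, ?_⟩
      · have h4 : 4 < k ^ 2 := by linarith [hk, hdpos]
        rcases abs_cases k with ⟨h1, h2⟩ | ⟨h1, h2⟩ <;> rw [h1] <;> nlinarith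
      · rw [sq_abs]; linarith [hk]
  obtain ⟨z, hzz⟩ := even_add_of_sq t B (e - A * C) (by linarith)
  have hz2 : 2 * z = t + B := by omega
  have key4 : 4 * (z * (z - t)) = 4 * (A * C - e) := by
    linear_combination (2 * z - t + B) * hz2 - hsq
  have key : z * (z - t) = A * C - e := by linarith
  have hzC : C < z := z_bound A B C t e z hA hC hABC ht1 he hsq hz2
  have hzA : A < z := z_bound C B A t e z hC hA (by omega) ht1 he (by linarith) hz2
  have hco : IsCoprime z A := by
    rcases he with rfl | rfl
    · exact ⟨t - z, C, by linear_combination -key⟩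
    · exact ⟨z - t, -C, by linear_combination key⟩
  have hcozA : IsCoprime z (z - A) := by
    have h := (hco.neg_right).add_mul_left_right 1
    have h' : -A + z * 1 = z - A := by ring
    rwa [h'] at h
  set b : Bool := decide (e = -1) with hb
  obtain ⟨L, hLpos, hLp, hLq, hLpar⟩ := euclid_cf (z - A) z (by omega) (by omega) hcozA b
  have hz0 : 0 < z := by omega
  rcases L with _ | ⟨x, _ | ⟨y, rest⟩⟩
  · exfalso; rw [cont_nil] at hLp; omega
  · -- length-one case is impossible
    exfalso
    rw [cont_singleton] at hLp
    have hq1 : cont ([x] : List ℤ).tail = 1 := cont_nil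
    rw [hq1] at hLq
    have hzA1 : z = A + 1 := by omega
    have hbf : ¬ Even ([x] : List ℤ).length := by simp
    have he1 : e = 1 := by
      rcases he with he' | he'
      · exact he'
      · exfalso
        apply hbf
        rw [hLpar, hb, he']
        simp
    subst he1
    have hw : C + 1 = z * (t + C - z) := by linear_combination key - C * hzA1
    have hdvd : z ∣ C + 1 := ⟨t + C - z, hw⟩
    have hle : z ≤ C + 1 := Int.le_of_dvd (by omega) hdvd
    have hCz : C + 1 = z := by omega
    have h9 : z = z * (t + C - z) := by linarith [hw]
    have h10 : (1 : ℤ) = t + C - z :=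
      mul_left_cancel₀ (ne_of_gt hz0) (by rw [mul_one]; exact h9)
    have ht2 : t = 2 := by omega
    rw [ht2] at hsq
    norm_num at hsq
    linarith
  · -- the main case
    set M := x :: y :: rest with hM
    have hlen2 : 2 ≤ M.length := by simp [hM]
    have htail : M.tail = y :: rest := rfl
    have hdet : cont M * cont ((y :: rest).dropLast) - cont (y :: rest) * cont M.dropLast
        = (-1 : ℤ) ^ M.length := by
      have h := cont_det M hlen2
      rw [htail] at h
      exact h
    rw [htail] at hLq
    have hsign : ((-1 : ℤ)) ^ M.length = -e := by
      rcases he with he' | he'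
      · have : ¬ Even M.length := by
          rw [hLpar, hb, he']
          simp
        rw [(Nat.not_even_iff_odd.mp this).neg_one_pow, he']
      · have : Even M.length := by
          rw [hLpar, hb, he']
          simp
        rw [this.neg_one_pow, he']
        norm_num
    set K2 := cont M.dropLast with hK2
    set K3 := cont ((y :: rest).dropLast) with hK3
    have det2 : z * K3 - (z - A) * K2 = -e := by
      rw [← hLq, ← hLp]
      rw [hsign] at hdet
      exact hdet
    have target2 : z * (B - A - C) - (z - A) * (z - C) = -e := by
      linear_combination key - z * hz2
    have hsub : z * (K3 - (B - A - C)) = (z - A) * (K2 - (z - C)) := by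
      linear_combination det2 - target2
    have hdvd : z ∣ (z - A) * (K2 - (z - C)) := ⟨K3 - (B - A - C), hsub.symm⟩
    have hdvd2 : z ∣ K2 - (z - C) := hcozA.dvd_of_dvd_mul_left hdvd
    have hK2a : 1 ≤ K2 := cont_pos _ (pos_dropLast hLpos)
    have hK2b : K2 < z := by
      rw [← hLp]
      exact cont_dropLast_lt M hLpos hlen2
    have heq : K2 = z - C := by
      obtain ⟨c, hc⟩ := hdvd2
      have hc0 : c = 0 := by
        rcases lt_trichotomy c 0 with h' | h' | h'
        · exfalso
          have hcc : c ≤ -1 := by omega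
          have : z * c ≤ z * (-1) := mul_le_mul_of_nonneg_left hcc (le_of_lt hz0)
          omega
        · exact h'
        · exfalso
          have hcc : 1 ≤ c := by omega
          have : z * 1 ≤ z * c := mul_le_mul_of_nonneg_left hcc (le_of_lt hz0)
          omega
      rw [hc0, mul_zero] at hc
      omega
    have hK3eq : K3 = B - A - C := by
      rw [heq] at hsub
      simp only [sub_self, mul_zero] at hsub
      have := mul_eq_zero.mp hsub
      rcases this with h' | h'
      · omega
      · omega
    refine ⟨M, hlen2, hLpos, ?_⟩
    rw [tau_eval x y rest]
    rw [QF.mk.injEq]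
    rw [← hK2, ← hK3, hLp, hLq, heq, hK3eq]
    refine ⟨by ring, by ring, by ring⟩

/-- Increment the head of a list (or produce `[1]` from the empty list). -/
def incHead : List ℤ → List ℤ
  | [] => [1]
  | q :: r => (q + 1) :: r

/-- Inverse of the stars-and-bars map. -/
def sbInv : List Bool → List ℤ
  | [] => [1]
  | false :: t => incHead (sbInv t)
  | true :: t => 1 :: sbInv t

theorem sbInv_ne_nil : ∀ s, sbInv s ≠ []
  | [] => by simp [sbInv]
  | false :: t => by
    show incHead (sbInv t) ≠ []
    cases h : sbInv t <;> simp [incHead]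
  | true :: t => by simp [sbInv]

theorem sbInv_pos : ∀ s, ∀ x ∈ sbInv s, 0 < x
  | [] => by intro x hx; simp [sbInv] at hx; omega
  | true :: t => by
    intro x hx
    simp only [sbInv] at hx
    rcases List.mem_cons.mp hx with rfl | hx
    · norm_num
    · exact sbInv_pos t x hx
  | false :: t => by
    intro x hx
    have hx' : x ∈ incHead (sbInv t) := hx
    cases h : sbInv t with
    | nil => exact absurd h (sbInv_ne_nil t)
    | cons q rr =>
      rw [h] at hx'
      simp only [incHead] at hx'
      rcases List.mem_cons.mp hx' with rfl | hx''
      · have hq := sbInv_pos t q (by rw [h]; simp)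
        omega
      · exact sbInv_pos t x (by rw [h]; simp [hx''])

theorem sb_incHead (q : ℤ) (r : List ℤ) (hq : 1 ≤ q) :
    sb ((q + 1) :: r) = false :: sb (q :: r) := by
  have hn : (q + 1 - 1).toNat = (q - 1).toNat + 1 := by omega
  cases r with
  | nil =>
    show List.replicate (q + 1 - 1).toNat false = false :: List.replicate (q - 1).toNat false
    rw [hn, List.replicate_succ]
  | cons y r' =>
    show List.replicate (q + 1 - 1).toNat false ++ true :: sb (y :: r')
      = false :: (List.replicate (q - 1).toNat false ++ true :: sb (y :: r'))
    rw [hn, List.replicate_succ]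
    simp

theorem sb_sbInv : ∀ s, sb (sbInv s) = s
  | [] => by simp [sbInv, sb]
  | true :: t => by
    have IH := sb_sbInv t
    show sb (1 :: sbInv t) = true :: t
    cases h : sbInv t with
    | nil => exact absurd h (sbInv_ne_nil t)
    | cons q rr =>
      rw [h] at IH
      show sb (1 :: q :: rr) = true :: t
      show List.replicate ((1 : ℤ) - 1).toNat false ++ true :: sb (q :: rr) = true :: t
      rw [IH]
      norm_num
  | false :: t => by
    have IH := sb_sbInv t
    show sb (incHead (sbInv t)) = false :: t
    cases h : sbInv t with
    | nil => exact absurd h (sbInv_ne_nil t)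
    | cons q rr =>
      rw [h] at IH
      show sb (incHead (q :: rr)) = false :: t
      have hq : 1 ≤ q := sbInv_pos t q (by rw [h]; simp)
      show sb ((q + 1) :: rr) = false :: t
      rw [sb_incHead q rr hq, IH]

theorem sbInv_len : ∀ s, true ∈ s → 2 ≤ (sbInv s).length
  | [] => by simp
  | true :: t => by
    intro _
    show 2 ≤ (1 :: sbInv t).length
    have := sbInv_ne_nil t
    cases h : sbInv t with
    | nil => exact absurd h this
    | cons q rr => simp
  | false :: t => by
    intro hs
    have ht : true ∈ t := by
      rcases List.mem_cons.mp hs with h | h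
      · exact absurd h (by simp)
      · exact h
    have IH := sbInv_len t ht
    show 2 ≤ (incHead (sbInv t)).length
    cases h : sbInv t with
    | nil => exact absurd h (sbInv_ne_nil t)
    | cons q rr =>
      rw [h] at IH
      simp only [incHead]
      simpa using IH

/-- **Corollary.** `σ : Z → B₁` is surjective; `τ ∘ sb⁻¹` is a section of `σ`
whose image is the set of Z-reduced forms of discriminant `k² ± 4`. -/
theorem stmt5 :
    (∀ s : List Bool, true ∈ s → ∃ f : QF, f.IsZReduced ∧ f.IsSigma s) ∧
    (∀ L : List ℤ, 2 ≤ L.length → (∀ q ∈ L, 0 < q) →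
      (tau L).IsZReduced ∧ (tau L).IsSigma (sb L) ∧
      (∃ k : ℤ, (tau L).disc = k ^ 2 + 4 ∨ (tau L).disc = k ^ 2 - 4)) ∧
    (∀ f : QF, f.IsZReduced →
      (∃ k : ℤ, f.disc = k ^ 2 + 4 ∨ f.disc = k ^ 2 - 4) →
      ∃ L : List ℤ, 2 ≤ L.length ∧ (∀ q ∈ L, 0 < q) ∧ tau L = f) := by
  refine ⟨?_, ?_, fun f hZ hk => tau_surj f hZ hk⟩
  · intro s hs
    obtain ⟨h1, h2, _⟩ := tau_main (sbInv s) (sbInv_len s hs) (sbInv_pos s)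
    exact ⟨tau (sbInv s), h1, ⟨sbInv s, h2, (sb_sbInv s).symm⟩⟩
  · intro L h2 hpos
    obtain ⟨h1, hb, h3⟩ := tau_main L h2 hpos
    exact ⟨h1, ⟨L, hb, rfl⟩, h3⟩
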